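/- Let G be a properly edge-coloured graph with maximum degree at most Δ, let (P,v,U,{Q_u}) be a (d,γ)-leaky (ℓ,s,t)-mop in G, and let B ⊆ V(G)\U satisfy deg(u, B; C(G)\C(P)) ≤ Δ' for every u ∈ U. Then G contains an (ℓ, s+1, t')-mop (P, v, U', {Q'_{u'}}) with U' ∩ B = ∅ and t' ≥ (1 + (γ(d−ℓ) − Δ' − 2s)/Δ)·t − |V(P)\B|. -/

import Mathlib

/-- A proper edge-colouring of an undirected graph: the colour function is symmetric on
edges, and no two edges sharing a vertex have the same colour. -/
def IsProperEdgeColoring {V C : Type*} (G : SimpleGraph V) (c : V → V → C) : Prop :=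
  (∀ u v, G.Adj u v → c u v = c v u) ∧
  (∀ u v w, G.Adj u v → G.Adj u w → v ≠ w → c u v ≠ c u w)

/-- A rainbow path of length `ℓ`. -/
def IsRainbowPath {V C : Type*} (G : SimpleGraph V) (c : V → V → C) {ℓ : ℕ}
    (p : Fin (ℓ + 1) → V) : Prop :=
  Function.Injective p ∧ (∀ i : Fin ℓ, G.Adj (p i.castSucc) (p i.succ)) ∧
    Function.Injective fun i : Fin ℓ => c (p i.castSucc) (p i.succ)

/-- An `(ℓ,s,|U|)`-mop: a rainbow path (handle) `P` of length `ℓ`, a set `U` of ends,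
and for each `u ∈ U` a strand of length `qlen u ≤ s` from the endpoint of `P` to `u`
such that the handle together with the strand (encoded as the extended path `R u`,
which restricts to `P` on its first `ℓ+1` vertices and ends at `u`) is a rainbow
path. -/
def IsMop {V C : Type*} (G : SimpleGraph V) (c : V → V → C) (ℓ s : ℕ)
    (P : Fin (ℓ + 1) → V) (U : Finset V)
    (qlen : V → ℕ) (R : (u : V) → Fin (ℓ + qlen u + 1) → V) : Prop :=
  IsRainbowPath G c P ∧
  (∀ u ∈ U, qlen u ≤ s) ∧
  (∀ u ∈ U, IsRainbowPath G c (R u)) ∧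
  (∀ u ∈ U, ∀ i : Fin (ℓ + 1), R u (Fin.castLE (by omega) i) = P i) ∧
  (∀ u ∈ U, R u (Fin.last (ℓ + qlen u)) = u)

/-- The set of colours appearing on the handle `P`. -/
def handleColors {V C : Type*} (c : V → V → C) {ℓ : ℕ} (P : Fin (ℓ + 1) → V) : Set C :=
  Set.range fun i : Fin ℓ => c (P i.castSucc) (P i.succ)

lemma aux_snoc_inj {V : Type*} {n : ℕ} {p : Fin n → V} {w : V}
    (hp : Function.Injective p) (hw : w ∉ Set.range p) :
    Function.Injective (Fin.snoc p w : Fin (n+1) → V) := by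
  intro a b hab
  induction a using Fin.lastCases with
  | last =>
    induction b using Fin.lastCases with
    | last => rfl
    | cast j =>
      simp only [Fin.snoc_castSucc, Fin.snoc_last] at hab
      exact absurd ⟨j, hab.symm⟩ hw
  | cast i =>
    induction b using Fin.lastCases with
    | last =>
      simp only [Fin.snoc_castSucc, Fin.snoc_last] at hab
      exact absurd ⟨i, hab⟩ hw
    | cast j =>
      simp only [Fin.snoc_castSucc] at hab
      exact congrArg Fin.castSucc (hp hab)

lemma aux_snoc_rainbow {V C : Type*} (G : SimpleGraph V) (c : V → V → C) {m : ℕ}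
    (p : Fin (m+1) → V) (w : V) (hp : IsRainbowPath G c p)
    (hw : w ∉ Set.range p) (hadj : G.Adj (p (Fin.last m)) w)
    (hcol : ∀ i : Fin m, c (p i.castSucc) (p i.succ) ≠ c (p (Fin.last m)) w) :
    IsRainbowPath G c (Fin.snoc p w : Fin (m+1+1) → V) := by
  obtain ⟨hinj, hadjs, hcinj⟩ := hp
  have hedge : ∀ j : Fin m,
      (Fin.snoc p w : Fin (m+2) → V) (j.castSucc).castSucc = p j.castSucc ∧
      (Fin.snoc p w : Fin (m+2) → V) (j.castSucc).succ = p j.succ := by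
    intro j
    constructor
    · simp
    · rw [Fin.succ_castSucc, Fin.snoc_castSucc]
  have hlastedge :
      (Fin.snoc p w : Fin (m+2) → V) (Fin.last m).castSucc = p (Fin.last m) ∧
      (Fin.snoc p w : Fin (m+2) → V) (Fin.last m).succ = w := by
    constructor
    · simp
    · rw [Fin.succ_last]; simp
  refine ⟨aux_snoc_inj hinj hw, ?_, ?_⟩
  · intro i
    induction i using Fin.lastCases with
    | last => rw [hlastedge.1, hlastedge.2]; exact hadj
    | cast j => rw [(hedge j).1, (hedge j).2]; exact hadjs j
  · intro a b hab
    simp only at hab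
    induction a using Fin.lastCases with
    | last =>
      induction b using Fin.lastCases with
      | last => rfl
      | cast j =>
        rw [hlastedge.1, hlastedge.2, (hedge j).1, (hedge j).2] at hab
        exact absurd hab.symm (hcol j)
    | cast i =>
      induction b using Fin.lastCases with
      | last =>
        rw [hlastedge.1, hlastedge.2, (hedge i).1, (hedge i).2] at hab
        exact absurd hab (hcol i)
      | cast j =>
        rw [(hedge i).1, (hedge i).2, (hedge j).1, (hedge j).2] at hab
        exact congrArg Fin.castSucc (hcinj hab)

lemma aux_numeric (γ : ℝ) (d ℓ s t Δ Δ' ec wc wpc uc : ℕ) (pB : ℝ)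
    (hpB0 : 0 ≤ pB)
    (hleaky' : γ * ((d : ℝ) - ℓ) * t ≤ (ec : ℝ))
    (hEcast : (ec : ℝ) ≤ (Δ' : ℝ) * t + (s : ℝ) * t + (s : ℝ) * t + (Δ : ℝ) * wc)
    (hWsplit : (wc : ℝ) ≤ (wpc : ℝ) + pB)
    (huc : uc = t + wpc) :
    (1 + (γ * ((d : ℝ) - ℓ) - Δ' - 2 * s) / Δ) * t - pB ≤ (uc : ℝ) := by
  have hU'cast : (uc : ℝ) = (t : ℝ) + (wpc : ℝ) := by rw [huc]; push_cast; ring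
  by_cases hΔ : (Δ : ℝ) = 0
  · rw [hΔ]
    simp only [div_zero, add_zero, one_mul]
    have h0 : (0:ℝ) ≤ (wpc : ℝ) := by positivity
    rw [hU'cast]; linarith
  · have hΔpos : (0:ℝ) < Δ := lt_of_le_of_ne (by positivity) (Ne.symm hΔ)
    have key : (γ * ((d : ℝ) - ℓ) - Δ' - 2 * s) / Δ * t ≤ ((wpc) : ℝ) + pB := by
      rw [div_mul_eq_mul_div, div_le_iff₀ hΔpos]
      have hmul : (Δ : ℝ) * wc ≤ (Δ : ℝ) * (((wpc) : ℝ) + pB) :=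
        mul_le_mul_of_nonneg_left hWsplit (le_of_lt hΔpos)
      nlinarith [hleaky', hEcast]
    rw [hU'cast]; nlinarith [key]


/-- If `(P,v,U,{Q_u})` is a `(d,γ)`-leaky `(ℓ,s,t)`-mop in a properly edge-coloured
graph of maximum degree at most `Δ`, and `B ⊆ V(G) \ U` with
`deg(u, B; C(G)\C(P)) ≤ Δ'` for every `u ∈ U`, then `G` contains an `(ℓ,s+1,t')`-mop
with the same handle, ends avoiding `B`, and
`t' ≥ (1 + (γ(d-ℓ) - Δ' - 2s)/Δ)·t - |V(P) \ B|`. -/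
theorem stmt12 {V C : Type*} [Fintype V]
    (G : SimpleGraph V) (c : V → V → C) (hproper : IsProperEdgeColoring G c)
    (d ℓ s t Δ Δ' : ℕ) (γ : ℝ) (hγ : 0 < γ)
    (hmaxdeg : ∀ v, (G.neighborSet v).ncard ≤ Δ)
    (P : Fin (ℓ + 1) → V) (U : Finset V) (qlen : V → ℕ)
    (R : (u : V) → Fin (ℓ + qlen u + 1) → V)
    (hmop : IsMop G c ℓ s P U qlen R) (ht : U.card = t)
    (hleaky : γ * ((d : ℝ) - ℓ) * U.card ≤
      ({q : V × V | q.1 ∈ U ∧ q.2 ∉ U ∧ G.Adj q.1 q.2 ∧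
          c q.1 q.2 ∉ handleColors c P}.ncard : ℝ))
    (B : Finset V) (hB : ∀ b ∈ B, b ∉ U)
    (hBdeg : ∀ u ∈ U,
      {w | w ∈ B ∧ G.Adj u w ∧ c u w ∉ handleColors c P}.ncard ≤ Δ') :
    ∃ (U' : Finset V) (qlen' : V → ℕ) (R' : (u : V) → Fin (ℓ + qlen' u + 1) → V),
      IsMop G c ℓ (s + 1) P U' qlen' R' ∧ (∀ b ∈ B, b ∉ U') ∧
      (1 + (γ * ((d : ℝ) - ℓ) - Δ' - 2 * s) / Δ) * t
          - ((Set.range P \ ↑B).ncard : ℝ) ≤ (U'.card : ℝ) := by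
  classical
  obtain ⟨hP, hqs, hRrb, hres, hlast⟩ := hmop
  set E' : Finset (V × V) := Finset.univ.filter (fun q =>
    q.1 ∈ U ∧ q.2 ∉ U ∧ G.Adj q.1 q.2 ∧ c q.1 q.2 ∉ handleColors c P) with hE'
  set bad1 : V × V → Prop := fun q => q.2 ∈ B with hbad1
  set bad2 : V × V → Prop := fun q => ∃ n, ∃ hn : n < qlen q.1,
    c q.1 q.2 = c (R q.1 (⟨ℓ+n, by omega⟩ : Fin (ℓ + qlen q.1)).castSucc)
      (R q.1 (⟨ℓ+n, by omega⟩ : Fin (ℓ + qlen q.1)).succ) with hbad2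
  set bad3 : V × V → Prop := fun q => ∃ n, ∃ hn : n < qlen q.1,
    q.2 = R q.1 (⟨ℓ+1+n, by omega⟩ : Fin (ℓ + qlen q.1 + 1)) with hbad3
  set GP : Finset (V × V) := E'.filter (fun q => ¬ bad1 q ∧ ¬ bad2 q ∧ ¬ bad3 q) with hGP
  set W : Finset V := GP.image Prod.snd with hW
  set PF : Finset V := Finset.image P Finset.univ with hPF
  set U' : Finset V := U ∪ (W \ PF) with hU'
  -- basic membership facts
  have hmemE' : ∀ q : V × V, q ∈ E' ↔
      (q.1 ∈ U ∧ q.2 ∉ U ∧ G.Adj q.1 q.2 ∧ c q.1 q.2 ∉ handleColors c P) := by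
    intro q; simp [hE']
  have hleaky' : γ * ((d : ℝ) - ℓ) * t ≤ (E'.card : ℝ) := by
    have hset : ({q : V × V | q.1 ∈ U ∧ q.2 ∉ U ∧ G.Adj q.1 q.2 ∧
        c q.1 q.2 ∉ handleColors c P} : Set (V × V)) = ↑E' := by
      ext q; simp [hE']
    rw [← ht]
    calc γ * ((d : ℝ) - ℓ) * U.card ≤
        (({q : V × V | q.1 ∈ U ∧ q.2 ∉ U ∧ G.Adj q.1 q.2 ∧
          c q.1 q.2 ∉ handleColors c P} : Set (V × V)).ncard : ℝ) := hleaky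
      _ = (E'.card : ℝ) := by rw [hset, Set.ncard_coe_finset]
  have h1 : (E'.filter bad1).card ≤ Δ' * t := by
    rw [← ht]
    have hfib : ∀ q ∈ E'.filter bad1, q.1 ∈ U := fun q hq =>
      ((hmemE' q).mp (Finset.mem_filter.mp hq).1).1
    rw [Finset.card_eq_sum_card_fiberwise hfib]
    have hbound : ∀ u ∈ U, ((E'.filter bad1).filter (fun q => q.1 = u)).card ≤ Δ' := by
      intro u hu
      have hfin : {w | w ∈ B ∧ G.Adj u w ∧ c u w ∉ handleColors c P}.Finite := Set.toFinite _
      have hcard : ((E'.filter bad1).filter (fun q => q.1 = u)).card ≤ hfin.toFinset.card := by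
        refine Finset.card_le_card_of_injOn Prod.snd ?_ ?_
        · intro q hq
          obtain ⟨hq', hq1⟩ := Finset.mem_filter.mp hq
          obtain ⟨hqE, hb1⟩ := Finset.mem_filter.mp hq'
          obtain ⟨-, -, hadj, hch⟩ := (hmemE' q).mp hqE
          rw [Finset.mem_coe, Set.Finite.mem_toFinset]
          exact ⟨hb1, hq1 ▸ hadj, hq1 ▸ hch⟩
        · intro q hq q' hq' hss
          have e1 : q.1 = u := (Finset.mem_filter.mp hq).2
          have e2 : q'.1 = u := (Finset.mem_filter.mp hq').2
          exact Prod.ext (e1.trans e2.symm) hss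
      calc ((E'.filter bad1).filter (fun q => q.1 = u)).card ≤ hfin.toFinset.card := hcard
        _ = {w | w ∈ B ∧ G.Adj u w ∧ c u w ∉ handleColors c P}.ncard :=
          (Set.ncard_eq_toFinset_card _ hfin).symm
        _ ≤ Δ' := hBdeg u hu
    calc ∑ u ∈ U, ((E'.filter bad1).filter (fun q => q.1 = u)).card
        ≤ ∑ _u ∈ U, Δ' := Finset.sum_le_sum hbound
      _ = U.card * Δ' := by rw [Finset.sum_const, smul_eq_mul]
      _ = Δ' * U.card := Nat.mul_comm _ _
  have h2 : (E'.filter bad2).card ≤ s * t := by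
    rw [← ht]
    have hfib : ∀ q ∈ E'.filter bad2, q.1 ∈ U := fun q hq =>
      ((hmemE' q).mp (Finset.mem_filter.mp hq).1).1
    rw [Finset.card_eq_sum_card_fiberwise hfib]
    have hbound : ∀ u ∈ U, ((E'.filter bad2).filter (fun q => q.1 = u)).card ≤ s := by
      intro u hu
      have hcard : ((E'.filter bad2).filter (fun q => q.1 = u)).card ≤
          (Finset.univ.image (fun j : Fin (qlen u) =>
            c (R u (⟨ℓ + j.1, by omega⟩ : Fin (ℓ + qlen u)).castSucc)
              (R u (⟨ℓ + j.1, by omega⟩ : Fin (ℓ + qlen u)).succ))).card := by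
        refine Finset.card_le_card_of_injOn (fun q => c u q.2) ?_ ?_
        · rintro ⟨a, b⟩ hq
          obtain ⟨hq', hq1⟩ := Finset.mem_filter.mp hq
          obtain ⟨hqE, hb2⟩ := Finset.mem_filter.mp hq'
          simp only at hq1
          subst hq1
          simp only [hbad2] at hb2
          obtain ⟨n, hn, hcol⟩ := hb2
          refine Finset.mem_image.mpr ⟨⟨n, hn⟩, Finset.mem_univ _, ?_⟩
          exact hcol.symm
        · intro q hq q' hq' hcc
          have e1 : q.1 = u := (Finset.mem_filter.mp hq).2
          have e2 : q'.1 = u := (Finset.mem_filter.mp hq').2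
          have hadj1 : G.Adj u q.2 := e1 ▸ ((hmemE' q).mp (Finset.mem_filter.mp (Finset.mem_filter.mp hq).1).1).2.2.1
          have hadj2 : G.Adj u q'.2 := e2 ▸ ((hmemE' q').mp (Finset.mem_filter.mp (Finset.mem_filter.mp hq').1).1).2.2.1
          by_contra hne
          have hne2 : q.2 ≠ q'.2 := fun h => hne (Prod.ext (e1.trans e2.symm) h)
          exact hproper.2 u q.2 q'.2 hadj1 hadj2 hne2 hcc
      calc ((E'.filter bad2).filter (fun q => q.1 = u)).card ≤ _ := hcard
        _ ≤ (Finset.univ : Finset (Fin (qlen u))).card := Finset.card_image_le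
        _ = qlen u := by simp
        _ ≤ s := hqs u hu
    calc ∑ u ∈ U, ((E'.filter bad2).filter (fun q => q.1 = u)).card
        ≤ ∑ _u ∈ U, s := Finset.sum_le_sum hbound
      _ = U.card * s := by rw [Finset.sum_const, smul_eq_mul]
      _ = s * U.card := Nat.mul_comm _ _
  have h3 : (E'.filter bad3).card ≤ s * t := by
    rw [← ht]
    have hfib : ∀ q ∈ E'.filter bad3, q.1 ∈ U := fun q hq =>
      ((hmemE' q).mp (Finset.mem_filter.mp hq).1).1
    rw [Finset.card_eq_sum_card_fiberwise hfib]
    have hbound : ∀ u ∈ U, ((E'.filter bad3).filter (fun q => q.1 = u)).card ≤ s := by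
      intro u hu
      have hcard : ((E'.filter bad3).filter (fun q => q.1 = u)).card ≤
          (Finset.univ.image (fun j : Fin (qlen u) =>
            R u (⟨ℓ + 1 + j.1, by omega⟩ : Fin (ℓ + qlen u + 1)))).card := by
        refine Finset.card_le_card_of_injOn Prod.snd ?_ ?_
        · rintro ⟨a, b⟩ hq
          obtain ⟨hq', hq1⟩ := Finset.mem_filter.mp hq
          obtain ⟨hqE, hb3⟩ := Finset.mem_filter.mp hq'
          simp only at hq1
          subst hq1
          simp only [hbad3] at hb3
          obtain ⟨n, hn, hb⟩ := hb3
          exact Finset.mem_image.mpr ⟨⟨n, hn⟩, Finset.mem_univ _, hb.symm⟩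
        · intro q hq q' hq' hss
          have e1 : q.1 = u := (Finset.mem_filter.mp hq).2
          have e2 : q'.1 = u := (Finset.mem_filter.mp hq').2
          exact Prod.ext (e1.trans e2.symm) hss
      calc ((E'.filter bad3).filter (fun q => q.1 = u)).card ≤ _ := hcard
        _ ≤ (Finset.univ : Finset (Fin (qlen u))).card := Finset.card_image_le
        _ = qlen u := by simp
        _ ≤ s := hqs u hu
    calc ∑ u ∈ U, ((E'.filter bad3).filter (fun q => q.1 = u)).card
        ≤ ∑ _u ∈ U, s := Finset.sum_le_sum hbound
      _ = U.card * s := by rw [Finset.sum_const, smul_eq_mul]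
      _ = s * U.card := Nat.mul_comm _ _
  have h4 : GP.card ≤ Δ * W.card := by
    have hfib : ∀ q ∈ GP, q.2 ∈ W := fun q hq => Finset.mem_image_of_mem Prod.snd hq
    rw [Finset.card_eq_sum_card_fiberwise hfib]
    have hbound : ∀ w ∈ W, (GP.filter (fun q => q.2 = w)).card ≤ Δ := by
      intro w _
      have hfin : (G.neighborSet w).Finite := Set.toFinite _
      have hcard : (GP.filter (fun q => q.2 = w)).card ≤ hfin.toFinset.card := by
        refine Finset.card_le_card_of_injOn Prod.fst ?_ ?_
        · intro q hq
          obtain ⟨hq', hq2⟩ := Finset.mem_filter.mp hq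
          have hadj : G.Adj q.1 q.2 := ((hmemE' q).mp (Finset.mem_filter.mp hq').1).2.2.1
          rw [Finset.mem_coe, Set.Finite.mem_toFinset]
          exact (hq2 ▸ hadj).symm
        · intro q hq q' hq' hff
          have e1 : q.2 = w := (Finset.mem_filter.mp hq).2
          have e2 : q'.2 = w := (Finset.mem_filter.mp hq').2
          exact Prod.ext hff (e1.trans e2.symm)
      calc (GP.filter (fun q => q.2 = w)).card ≤ hfin.toFinset.card := hcard
        _ = (G.neighborSet w).ncard := (Set.ncard_eq_toFinset_card _ hfin).symm
        _ ≤ Δ := hmaxdeg w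
    calc ∑ w ∈ W, (GP.filter (fun q => q.2 = w)).card
        ≤ ∑ _w ∈ W, Δ := Finset.sum_le_sum hbound
      _ = W.card * Δ := by rw [Finset.sum_const, smul_eq_mul]
      _ = Δ * W.card := Nat.mul_comm _ _
  have hsplit : E'.card ≤ (E'.filter bad1).card + (E'.filter bad2).card
      + (E'.filter bad3).card + GP.card := by
    have hsub : E' ⊆ (E'.filter bad1) ∪ (E'.filter bad2) ∪ (E'.filter bad3) ∪ GP := by
      intro q hq
      simp only [Finset.mem_union, Finset.mem_filter, hGP]
      by_cases b1 : bad1 q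
      · exact Or.inl (Or.inl (Or.inl ⟨hq, b1⟩))
      by_cases b2 : bad2 q
      · exact Or.inl (Or.inl (Or.inr ⟨hq, b2⟩))
      by_cases b3 : bad3 q
      · exact Or.inl (Or.inr ⟨hq, b3⟩)
      · exact Or.inr ⟨hq, b1, b2, b3⟩
    calc E'.card ≤ ((E'.filter bad1) ∪ (E'.filter bad2) ∪ (E'.filter bad3) ∪ GP).card :=
        Finset.card_le_card hsub
      _ ≤ ((E'.filter bad1) ∪ (E'.filter bad2) ∪ (E'.filter bad3)).card + GP.card :=
        Finset.card_union_le _ _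
      _ ≤ ((E'.filter bad1) ∪ (E'.filter bad2)).card + (E'.filter bad3).card + GP.card := by
        have := Finset.card_union_le ((E'.filter bad1) ∪ (E'.filter bad2)) (E'.filter bad3)
        omega
      _ ≤ (E'.filter bad1).card + (E'.filter bad2).card + (E'.filter bad3).card + GP.card := by
        have := Finset.card_union_le (E'.filter bad1) (E'.filter bad2)
        omega
  have hWB : ∀ w ∈ W, w ∉ B := by
    intro w hw
    obtain ⟨q, hq, rfl⟩ := Finset.mem_image.mp hw
    exact (Finset.mem_filter.mp hq).2.1
  have hWU : ∀ w ∈ W, w ∉ U := by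
    intro w hw
    obtain ⟨q, hq, rfl⟩ := Finset.mem_image.mp hw
    exact ((hmemE' q).mp (Finset.mem_filter.mp hq).1).2.1
  have hWsplit : (W.card : ℝ) ≤ ((W \ PF).card : ℝ) + ((Set.range P \ ↑B).ncard : ℝ) := by
    have h5 : (W ∩ PF).card + (W \ PF).card = W.card := Finset.card_inter_add_card_sdiff W PF
    have h6 : W ∩ PF ⊆ PF \ B := by
      intro w hw
      rcases Finset.mem_inter.mp hw with ⟨hw1, hw2⟩
      exact Finset.mem_sdiff.mpr ⟨hw2, hWB w hw1⟩
    have h7 : ((PF \ B).card : ℕ) = (Set.range P \ ↑B).ncard := by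
      have : (↑(PF \ B) : Set V) = Set.range P \ ↑B := by
        ext x; simp [hPF]
      rw [← this, Set.ncard_coe_finset]
    have h8 : (W ∩ PF).card ≤ (Set.range P \ ↑B).ncard := by
      rw [← h7]; exact Finset.card_le_card h6
    have := Finset.card_le_card h6
    push_cast [← h5]
    have h8' : ((W ∩ PF).card : ℝ) ≤ ((Set.range P \ ↑B).ncard : ℝ) := by exact_mod_cast h8
    linarith
  have hU'card : U'.card = t + (W \ PF).card := by
    rw [hU', Finset.card_union_of_disjoint, ht]
    rw [Finset.disjoint_left]
    intro a ha ha'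
    exact hWU a (Finset.mem_sdiff.mp ha').1 ha
  -- construction of extended strands
  have hgood : ∀ w ∈ W \ PF, ∃ (n : ℕ) (r : Fin (ℓ + n + 1) → V),
      n ≤ s + 1 ∧ IsRainbowPath G c r ∧
      (∀ i : Fin (ℓ + 1), r (Fin.castLE (by omega) i) = P i) ∧
      r (Fin.last (ℓ + n)) = w := by
    intro w hw
    obtain ⟨hwW, hwPF⟩ := Finset.mem_sdiff.mp hw
    obtain ⟨q, hqGP, hq2⟩ := Finset.mem_image.mp hwW
    obtain ⟨hqE, hnb1, hnb2, hnb3⟩ := Finset.mem_filter.mp hqGP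
    obtain ⟨a, b⟩ := q
    simp only at hq2
    subst hq2
    obtain ⟨haU, hbU, hadj, hch⟩ := (hmemE' (a, b)).mp hqE
    simp only at haU hbU hadj hch hnb2 hnb3
    have hnotP : b ∉ Set.range P := by
      rintro ⟨i, hi⟩
      exact hwPF (Finset.mem_image.mpr ⟨i, Finset.mem_univ i, hi⟩)
    have hwr : b ∉ Set.range (R a) := by
      rintro ⟨k, hk⟩
      by_cases hkl : k.1 ≤ ℓ
      · apply hnotP
        refine ⟨⟨k.1, by omega⟩, ?_⟩
        rw [← hres a haU ⟨k.1, by omega⟩, ← hk]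
        congr 1
      · apply hnb3
        simp only [hbad3]
        refine ⟨k.1 - ℓ - 1, by omega, ?_⟩
        rw [← hk]
        congr 1
        ext
        simp
        omega
    have hcol : ∀ i : Fin (ℓ + qlen a),
        c (R a i.castSucc) (R a i.succ) ≠ c (R a (Fin.last (ℓ + qlen a))) b := by
      intro i heq
      rw [hlast a haU] at heq
      by_cases hil : i.1 < ℓ
      · apply hch
        have e1 : R a i.castSucc = P ⟨i.1, by omega⟩ := by
          have hcc : (i.castSucc : Fin (ℓ + qlen a + 1)) =
              Fin.castLE (by omega) (⟨i.1, by omega⟩ : Fin (ℓ + 1)) := by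
            ext; simp
          rw [hcc, hres a haU]
        have e2 : R a i.succ = P ⟨i.1 + 1, by omega⟩ := by
          have hcc : (i.succ : Fin (ℓ + qlen a + 1)) =
              Fin.castLE (by omega) (⟨i.1 + 1, by omega⟩ : Fin (ℓ + 1)) := by
            ext; simp
          rw [hcc, hres a haU]
        rw [e1, e2] at heq
        refine ⟨⟨i.1, hil⟩, ?_⟩
        show c (P _) (P _) = c a b
        rw [← heq]
        congr 1
      · apply hnb2
        simp only [hbad2]
        refine ⟨i.1 - ℓ, by omega, ?_⟩
        have hii : (⟨ℓ + (i.1 - ℓ), by omega⟩ : Fin (ℓ + qlen a)) = i := by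
          ext; simp; omega
        rw [hii]
        exact heq.symm
    refine ⟨qlen a + 1, Fin.snoc (R a) b, ?_, ?_, ?_, ?_⟩
    · have := hqs a haU; omega
    · exact aux_snoc_rainbow G c (R a) b (hRrb a haU) hwr
        (by rw [hlast a haU]; exact hadj) hcol
    · intro i
      have hcc : (Fin.castLE (by omega : ℓ + 1 ≤ ℓ + (qlen a + 1) + 1) i :
          Fin (ℓ + qlen a + 1 + 1)) =
          (Fin.castLE (by omega : ℓ + 1 ≤ ℓ + qlen a + 1) i).castSucc := by
        ext; simp
      show (Fin.snoc (R a) b : Fin (ℓ + qlen a + 1 + 1) → V) (Fin.castLE (by omega) i) = P i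
      rw [hcc, Fin.snoc_castSucc]
      exact hres a haU i
    · show (Fin.snoc (R a) b : Fin (ℓ + qlen a + 1 + 1) → V) (Fin.last (ℓ + qlen a + 1)) = b
      simp
  have hall : ∀ w : V, ∃ (n : ℕ) (r : Fin (ℓ + n + 1) → V), w ∈ U' →
      (n ≤ s + 1 ∧ IsRainbowPath G c r ∧
        (∀ i : Fin (ℓ + 1), r (Fin.castLE (by omega) i) = P i) ∧
        r (Fin.last (ℓ + n)) = w) := by
    intro w
    by_cases hw : w ∈ U'
    · rcases Finset.mem_union.mp hw with hwU | hwW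
      · exact ⟨qlen w, R w, fun _ => ⟨(hqs w hwU).trans (Nat.le_succ s), hRrb w hwU,
          hres w hwU, hlast w hwU⟩⟩
      · obtain ⟨n, r, hr⟩ := hgood w hwW
        exact ⟨n, r, fun _ => hr⟩
    · exact ⟨0, fun _ => P 0, fun h => absurd h hw⟩
  choose qlen' R' hspec using hall
  refine ⟨U', qlen', R', ⟨hP, fun u hu => (hspec u hu).1, fun u hu => (hspec u hu).2.1,
    fun u hu => (hspec u hu).2.2.1, fun u hu => (hspec u hu).2.2.2⟩, ?_, ?_⟩
  · intro b hb hbU'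
    rcases Finset.mem_union.mp hbU' with h | h
    · exact hB b hb h
    · exact hWB b (Finset.mem_sdiff.mp h).1 hb
  · -- numeric conclusion
    refine aux_numeric γ d ℓ s t Δ Δ' E'.card W.card (W \ PF).card U'.card _ (by positivity)
      hleaky' ?_ hWsplit hU'card
    have hnat : E'.card ≤ Δ' * t + s * t + s * t + Δ * W.card := by
      calc E'.card ≤ (E'.filter bad1).card + (E'.filter bad2).card
          + (E'.filter bad3).card + GP.card := hsplit
        _ ≤ Δ' * t + s * t + s * t + Δ * W.card := by
          gcongr <;> assumption
    exact_mod_cast hnat
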